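/- Let X be a compact Hausdorff space, ν ∈ H(X), and B ⊆ X a closed subset. Then ν ∈ H_X(B) if and only if ν(φ_1, a, b) = ν(φ_2, a, b) for all 0 ≤ a < b ≤ 1 and all continuous φ_1, φ_2 : X → ℝ whose restrictions to B coincide. -/

import Mathlib

open scoped Topology
open MeasureTheory

/-- The index set `S(X)`: triples `(φ, a, b)` with `φ : X → ℝ` continuous and
`0 ≤ a < b ≤ 1`. -/
structure SIdx (X : Type u) [TopologicalSpace X] : Type u where
  φ : C(X, ℝ)
  a : ℝ
  b : ℝ
  ha : 0 ≤ a
  hab : a < b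
  hb : b ≤ 1

/-- `α : ℝ → X` is a step function on `[0,1)`: there is a partition
`0 = t 0 < t 1 < ⋯ < t k = 1` with `α` constant on each `[t j, t (j+1))`. -/
def IsStep {X : Type u} (α : ℝ → X) : Prop :=
  ∃ (k : ℕ) (t : ℕ → ℝ), 1 ≤ k ∧ t 0 = 0 ∧ t k = 1 ∧ (∀ j < k, t j < t (j + 1)) ∧
    ∀ j < k, ∀ s ∈ Set.Ico (t j) (t (j + 1)), α s = α (t j)

/-- The embedding `e_X`, sending `α` to the point of `∏_{S(X)} ℝ` whose
`(φ, a, b)`-coordinate is `(1/(b-a)) ∫_a^b φ(α t) dt`. -/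
noncomputable def eHM {X : Type u} [TopologicalSpace X] (α : ℝ → X) : SIdx X → ℝ :=
  fun s => (1 / (s.b - s.a)) * ∫ t in s.a..s.b, s.φ (α t)

/-- `H(X)` as a subset of `∏_{S(X)} ℝ`: the closure of the image under `e_X`
of the set of step functions. -/
def HSet (X : Type u) [TopologicalSpace X] : Set (SIdx X → ℝ) :=
  closure (eHM '' {α : ℝ → X | IsStep α})

/-- `H(X)` as a topological space (subspace of the product `∏_{S(X)} ℝ`). -/
abbrev HSp (X : Type u) [TopologicalSpace X] : Type u := ↥(HSet X)

/-- `H_X(A)`: the closure of the image under `e_X` of the step functions taking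
values in `A` on `[0,1)`. -/
def HSetOn (X : Type u) [TopologicalSpace X] (A : Set X) : Set (SIdx X → ℝ) :=
  closure (eHM '' {α : ℝ → X | IsStep α ∧ ∀ t ∈ Set.Ico (0:ℝ) 1, α t ∈ A})

/-- The support of `ν`: the intersection of all closed `A ⊆ X` with `ν ∈ H_X(A)`. -/
def suppH {X : Type u} [TopologicalSpace X] (ν : SIdx X → ℝ) : Set X :=
  ⋂₀ {A : Set X | IsClosed A ∧ ν ∈ HSetOn X A}

/-- The reindexing map `R_f : ∏_{S(X)} ℝ → ∏_{S(Y)} ℝ`, `R_f x (ψ,a,b) = x (ψ∘f,a,b)`. -/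
def reindex {X : Type u} {Y : Type v} [TopologicalSpace X] [TopologicalSpace Y]
    (f : C(X, Y)) : (SIdx X → ℝ) → (SIdx Y → ℝ) :=
  fun x s => x ⟨s.φ.comp f, s.a, s.b, s.ha, s.hab, s.hb⟩

lemma isStep_comp {X : Type u} {Y : Type v} (f : X → Y) {α : ℝ → X} (h : IsStep α) :
    IsStep (f ∘ α) := by
  obtain ⟨k, t, hk, h0, h1, hm, hc⟩ := h
  exact ⟨k, t, hk, h0, h1, hm, fun j hj s hs => congrArg f (hc j hj s hs)⟩

lemma isStep_const {X : Type u} (x : X) : IsStep (fun _ : ℝ => x) :=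
  ⟨1, fun j => (j : ℝ), le_refl 1, by simp, by simp,
    fun j _ => by simp, fun _ _ _ _ => rfl⟩

/-- The point `e_X(α)` of `H(X)`, for a step function `α`. -/
noncomputable def toH {X : Type u} [TopologicalSpace X] (α : ℝ → X) (h : IsStep α) : HSp X :=
  ⟨eHM α, subset_closure ⟨α, h, rfl⟩⟩

lemma continuous_reindex {X : Type u} {Y : Type v} [TopologicalSpace X] [TopologicalSpace Y]
    (f : C(X, Y)) : Continuous (reindex f) :=
  continuous_pi fun _ => continuous_apply _

lemma reindex_mapsTo {X : Type u} {Y : Type v} [TopologicalSpace X] [TopologicalSpace Y]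
    (f : C(X, Y)) : Set.MapsTo (reindex f) (HSet X) (HSet Y) := by
  intro x hx
  have h2 := image_closure_subset_closure_image (s := eHM '' {α : ℝ → X | IsStep α})
    (continuous_reindex f)
  have h3 : reindex f '' (eHM '' {α : ℝ → X | IsStep α}) ⊆ eHM '' {α : ℝ → Y | IsStep α} := by
    rintro _ ⟨_, ⟨α, hα, rfl⟩, rfl⟩
    exact ⟨f ∘ α, isStep_comp f hα, rfl⟩
  exact closure_mono h3 (h2 ⟨x, hx, rfl⟩)

/-- The map `H(f) : H(X) → H(Y)` induced by a continuous `f : X → Y`, i.e. the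
restriction of the reindexing map `R_f`. -/
noncomputable def Hmap {X : Type u} {Y : Type v} [TopologicalSpace X] [TopologicalSpace Y]
    (f : C(X, Y)) : C(HSp X, HSp Y) where
  toFun x := ⟨reindex f x.1, reindex_mapsTo f x.2⟩
  continuous_toFun :=
    Continuous.subtype_mk ((continuous_reindex f).comp continuous_subtype_val) _

/-- The unit `η_X : X → H(X)`, `x ↦ e_X(const x)`. -/
noncomputable def etaMap (X : Type u) [TopologicalSpace X] : C(X, HSp X) where
  toFun x := toH (fun _ : ℝ => x) (isStep_const x)
  continuous_toFun := by
    refine Continuous.subtype_mk (continuous_pi fun s => ?_) _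
    simp only [eHM, intervalIntegral.integral_const]
    exact continuous_const.mul ((s.φ.continuous).const_smul (s.b - s.a))
/-- The index (0-based) of the subinterval `[i/n, (i+1)/n)` of `[0,1)` containing `s`
(as a natural number, clipped to `n - 1`). -/
noncomputable def stepIdxNat (n : ℕ) (s : ℝ) : ℕ := min ⌊s * n⌋₊ (n - 1)

lemma stepIdxNat_eq {n j : ℕ} (hj : j < n) {s : ℝ}
    (h1 : (j : ℝ) / n ≤ s) (h2 : s < ((j : ℝ) + 1) / n) : stepIdxNat n s = j := by
  have hn : (0:ℝ) < n := by
    have : 0 < n := by omega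
    exact_mod_cast this
  have h1' : (j : ℝ) ≤ s * n := by rw [div_le_iff₀ hn] at h1; exact h1
  have h2' : s * n < (j : ℝ) + 1 := by rw [lt_div_iff₀ hn] at h2; exact h2
  have hfl : ⌊s * n⌋₊ = j := by
    rw [Nat.floor_eq_iff (le_trans (Nat.cast_nonneg j) h1')]
    exact ⟨h1', h2'⟩
  unfold stepIdxNat
  omega

lemma isStep_stepIdxNat (n : ℕ) : IsStep (stepIdxNat n) := by
  rcases Nat.eq_zero_or_pos n with rfl | hn
  · exact ⟨1, fun j => (j : ℝ), le_refl 1, by simp, by simp, fun j _ => by simp,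
      fun j hj s hs => by simp [stepIdxNat]⟩
  · have hnR : (0:ℝ) < n := by exact_mod_cast hn
    refine ⟨n, fun j => (j : ℝ) / n, hn, by simp, by field_simp,
      fun j hj => ?_, fun j hj s hs => ?_⟩
    · exact (div_lt_div_iff_of_pos_right hnR).mpr (by push_cast; linarith)
    · obtain ⟨hs1, hs2⟩ := hs
      have hs2' : s < ((j : ℝ) + 1) / n := by
        convert hs2 using 2
        · rfl
        push_cast
        ring
      rw [stepIdxNat_eq hj hs1 hs2',
        stepIdxNat_eq hj (le_refl _) ((div_lt_div_iff_of_pos_right hnR).mpr (by linarith))]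
/-- The step function `β : [0,1) → K_n`, `β(s) = i` for `s ∈ [i/n, (i+1)/n)`,
with `K_n` realized as `Fin n` (0-based indexing). -/
noncomputable def stepIdx (n : ℕ) [NeZero n] (s : ℝ) : Fin n :=
  ⟨stepIdxNat n s, by
    have := NeZero.ne n
    unfold stepIdxNat
    omega⟩

lemma isStep_stepIdx (n : ℕ) [NeZero n] : IsStep (stepIdx n) := by
  have hn := NeZero.ne n
  have h : stepIdx n =
      (fun m : ℕ => (⟨min m (n - 1), by omega⟩ : Fin n)) ∘ stepIdxNat n := by
    funext s
    apply Fin.ext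
    simp [stepIdx, stepIdxNat, min_assoc]
  rw [h]
  exact isStep_comp _ (isStep_stepIdxNat n)

/-- The diagonal step function `α : [0,1) → K_n × K_n`, `α(s) = (i,i)` for
`s ∈ [i/n, (i+1)/n)`. -/
noncomputable def alphaDiag (n : ℕ) [NeZero n] : ℝ → Fin n × Fin n :=
  fun s => (stepIdx n s, stepIdx n s)

lemma isStep_alphaDiag (n : ℕ) [NeZero n] : IsStep (alphaDiag n) :=
  isStep_comp (fun i : Fin n => (i, i)) (isStep_stepIdx n)

/-- The step function `α_i : [0,1) → K_n × K_n`, `α_i(s) = (i,j)` for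
`s ∈ [j/n, (j+1)/n)`. -/
noncomputable def alphaRow (n : ℕ) [NeZero n] (i : Fin n) : ℝ → Fin n × Fin n :=
  fun s => (i, stepIdx n s)

lemma isStep_alphaRow (n : ℕ) [NeZero n] (i : Fin n) : IsStep (alphaRow n i) :=
  isStep_comp (fun j : Fin n => (i, j)) (isStep_stepIdx n)

/-- The step function `A_n : [0,1) → H(K_n × K_n)`, `A_n(s) = e(α_i)` for
`s ∈ [i/n, (i+1)/n)`. -/
noncomputable def An (n : ℕ) [NeZero n] : ℝ → HSp (Fin n × Fin n) :=
  fun s => toH (alphaRow n (stepIdx n s)) (isStep_alphaRow n _)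

lemma isStep_An (n : ℕ) [NeZero n] : IsStep (An n) :=
  isStep_comp (fun i : Fin n => toH (alphaRow n i) (isStep_alphaRow n i)) (isStep_stepIdx n)

/-- The step function `γ_i^{(n)} : [0,1) → D = {0,1}` which is `1` on
`[i/n, (i+1)/n)` and `0` elsewhere, with `D` realized as `Bool`. -/
noncomputable def gammaStep (n i : ℕ) : ℝ → Bool := fun s => decide (stepIdxNat n s = i)

lemma isStep_gammaStep (n i : ℕ) : IsStep (gammaStep n i) :=
  isStep_comp (fun m : ℕ => decide (m = i)) (isStep_stepIdxNat n)

/-- The step function `B_n : [0,1) → H(D)`, `B_n(s) = e(γ_i^{(n)})` for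
`s ∈ [i/n, (i+1)/n)`. -/
noncomputable def Bn (n : ℕ) : ℝ → HSp Bool :=
  fun s => toH (gammaStep n (stepIdxNat n s)) (isStep_gammaStep n _)

lemma isStep_Bn (n : ℕ) : IsStep (Bn n) :=
  isStep_comp (fun m : ℕ => toH (gammaStep n m) (isStep_gammaStep n m)) (isStep_stepIdxNat n)


lemma mem_closure_pi_iff {ι : Type*} {E : Set (ι → ℝ)} {ν : ι → ℝ} :
    ν ∈ closure E ↔ ∀ (I : Finset ι) (δ : ℝ), 0 < δ → ∃ x ∈ E, ∀ s ∈ I, |x s - ν s| < δ := by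
  classical
  constructor
  · intro h I δ hδ
    have hO : IsOpen {x : ι → ℝ | ∀ s ∈ I, |x s - ν s| < δ} := by
      have he : {x : ι → ℝ | ∀ s ∈ I, |x s - ν s| < δ}
          = ⋂ s ∈ I, {x : ι → ℝ | |x s - ν s| < δ} := by
        ext x; simp
      rw [he]
      exact isOpen_biInter_finset fun s _ =>
        isOpen_lt (((continuous_apply s).sub continuous_const).abs) continuous_const
    obtain ⟨x, hxO, hxE⟩ := mem_closure_iff.mp h _ hO (fun s _ => by simpa using hδ)
    exact ⟨x, hxE, hxO⟩
  · intro h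
    rw [mem_closure_iff]
    intro O hO hνO
    obtain ⟨I, uu, hu, hsub⟩ := isOpen_pi_iff.mp hO ν hνO
    have hball : ∀ s ∈ I, ∃ r > 0, Metric.ball (ν s) r ⊆ uu s := fun s hs =>
      Metric.isOpen_iff.mp (hu s hs).1 _ (hu s hs).2
    choose! r hr hrb using hball
    set δ : ℝ := if hne : I.Nonempty then I.inf' hne r else 1 with hδdef
    have hδ : 0 < δ := by
      rw [hδdef]
      split_ifs with hne
      · exact (Finset.lt_inf'_iff _).mpr fun s hs => hr s hs
      · exact one_pos
    obtain ⟨x, hxE, hx⟩ := h I δ hδ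
    refine ⟨x, hsub ?_, hxE⟩
    intro s hs
    apply hrb s hs
    rw [Metric.mem_ball, Real.dist_eq]
    refine lt_of_lt_of_le (hx s hs) ?_
    rw [hδdef]
    rw [dif_pos ⟨s, hs⟩]
    exact Finset.inf'_le _ hs

lemma exists_idx_partition {k : ℕ} {t : ℕ → ℝ} (hk : 1 ≤ k) (h0 : t 0 = 0) (h1 : t k = 1)
    {s : ℝ} (hs0 : 0 ≤ s) (hs1 : s < 1) :
    ∃ j < k, s ∈ Set.Ico (t j) (t (j + 1)) := by
  classical
  set J := (Finset.range k).filter (fun j => t j ≤ s) with hJ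
  have h0J : 0 ∈ J := by
    simp only [hJ, Finset.mem_filter, Finset.mem_range, h0]
    exact ⟨hk, hs0⟩
  have hne : J.Nonempty := ⟨0, h0J⟩
  set j := J.max' hne with hj
  have hjJ : j ∈ J := J.max'_mem hne
  have hjk : j < k := Finset.mem_range.mp (Finset.mem_filter.mp hjJ).1
  have hts : t j ≤ s := (Finset.mem_filter.mp hjJ).2
  refine ⟨j, hjk, hts, ?_⟩
  rcases eq_or_lt_of_le (Nat.succ_le_of_lt hjk) with he | hlt
  · rw [show j + 1 = k from he, h1]; exact hs1
  · by_contra hc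
    push_neg at hc
    have hmem : j + 1 ∈ J := Finset.mem_filter.mpr ⟨Finset.mem_range.mpr hlt, hc⟩
    have := J.le_max' _ hmem
    omega


lemma IsStep.integrableOn_comp {X : Type u} [TopologicalSpace X] {α : ℝ → X}
    (h : IsStep α) (φ : C(X, ℝ)) :
    IntegrableOn (fun s => φ (α s)) (Set.Ico (0:ℝ) 1) := by
  obtain ⟨k, t, hk, h0, h1, hm, hc⟩ := h
  have hsub : Set.Ico (0:ℝ) 1 ⊆ ⋃ j ∈ Finset.range k, Set.Ico (t j) (t (j+1)) := by
    intro s hs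
    obtain ⟨j, hj, hmem⟩ := exists_idx_partition hk h0 h1 hs.1 hs.2
    exact Set.mem_biUnion (Finset.mem_range.mpr hj) hmem
  refine IntegrableOn.mono_set ?_ hsub
  rw [integrableOn_finset_iUnion]
  intro j hj
  have hconst : Set.EqOn (fun s => φ (α s)) (fun _ => φ (α (t j))) (Set.Ico (t j) (t (j+1))) :=
    fun s hs => congrArg φ (hc j (Finset.mem_range.mp hj) s hs)
  rw [integrableOn_congr_fun hconst measurableSet_Ico]
  exact (integrableOn_const_iff (by simp)).mpr (Or.inr measure_Ico_lt_top)

lemma IsStep.intervalIntegrable_comp {X : Type u} [TopologicalSpace X] {α : ℝ → X}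
    (h : IsStep α) (φ : C(X, ℝ)) {a b : ℝ} (ha : 0 ≤ a) (hab : a ≤ b) (hb : b ≤ 1) :
    IntervalIntegrable (fun s => φ (α s)) volume a b := by
  rw [intervalIntegrable_iff_integrableOn_Ioo_of_le hab]
  exact (h.integrableOn_comp φ).mono_set
    (fun s hs => ⟨le_trans ha hs.1.le, lt_of_lt_of_le hs.2 hb⟩)

lemma coord_const {X : Type u} [TopologicalSpace X] {ν : SIdx X → ℝ} (hν : ν ∈ HSet X)
    (c : ℝ) (a b : ℝ) (ha : 0 ≤ a) (hab : a < b) (hb : b ≤ 1) :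
    ν ⟨ContinuousMap.const X c, a, b, ha, hab, hb⟩ = c := by
  have hcl : IsClosed {x : SIdx X → ℝ | x ⟨ContinuousMap.const X c, a, b, ha, hab, hb⟩ = c} :=
    isClosed_eq (continuous_apply _) continuous_const
  refine hcl.closure_subset_iff.mpr ?_ hν
  rintro _ ⟨α, hα, rfl⟩
  simp only [Set.mem_setOf_eq, eHM, ContinuousMap.const_apply,
    intervalIntegral.integral_const, smul_eq_mul, one_div]
  rw [inv_mul_cancel_left₀ (sub_ne_zero.mpr hab.ne')]

lemma eHM_integral_congr {X : Type u} [TopologicalSpace X] {α : ℝ → X} {B : Set X}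
    (hα : ∀ t ∈ Set.Ico (0:ℝ) 1, α t ∈ B) {φ₁ φ₂ : C(X, ℝ)} (hφ : ∀ x ∈ B, φ₁ x = φ₂ x)
    {a b : ℝ} (ha : 0 ≤ a) (hab : a < b) (hb : b ≤ 1) :
    (∫ t in a..b, φ₁ (α t)) = ∫ t in a..b, φ₂ (α t) := by
  apply intervalIntegral.integral_congr_ae
  have h1 : ∀ᵐ x : ℝ, x ≠ b := by
    rw [MeasureTheory.ae_iff]
    simp only [ne_eq, not_not, Set.setOf_eq_eq_singleton]
    exact Real.volume_singleton
  filter_upwards [h1] with x hx hxmem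
  rw [Set.uIoc_of_le hab.le] at hxmem
  have hx01 : x ∈ Set.Ico (0:ℝ) 1 :=
    ⟨le_trans ha hxmem.1.le, lt_of_lt_of_le (lt_of_le_of_ne hxmem.2 hx) hb⟩
  exact hφ _ (hα x hx01)

/-- `ν ∈ H_X(B)` iff `ν` does not separate continuous functions agreeing on `B`. -/
theorem mem_HSetOn_iff_coords_eq {X : Type u} [TopologicalSpace X] [CompactSpace X]
    [T2Space X] (ν : SIdx X → ℝ) (hν : ν ∈ HSet X) (B : Set X) (hB : IsClosed B) :
    ν ∈ HSetOn X B ↔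
      ∀ (φ₁ φ₂ : C(X, ℝ)) (a b : ℝ) (ha : 0 ≤ a) (hab : a < b) (hb : b ≤ 1),
        (∀ x ∈ B, φ₁ x = φ₂ x) →
          ν ⟨φ₁, a, b, ha, hab, hb⟩ = ν ⟨φ₂, a, b, ha, hab, hb⟩ := by
  classical
  constructor
  · intro hmem φ₁ φ₂ a b ha hab hb hφ
    have hcl : IsClosed {x : SIdx X → ℝ |
        x ⟨φ₁, a, b, ha, hab, hb⟩ = x ⟨φ₂, a, b, ha, hab, hb⟩} :=
      isClosed_eq (continuous_apply _) (continuous_apply _)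
    have hsub : eHM '' {α : ℝ → X | IsStep α ∧ ∀ t ∈ Set.Ico (0:ℝ) 1, α t ∈ B} ⊆
        {x : SIdx X → ℝ | x ⟨φ₁, a, b, ha, hab, hb⟩ = x ⟨φ₂, a, b, ha, hab, hb⟩} := by
      rintro _ ⟨α, ⟨hα, hαB⟩, rfl⟩
      simp only [Set.mem_setOf_eq, eHM]
      rw [eHM_integral_congr hαB hφ ha hab hb]
    exact hcl.closure_subset_iff.mpr hsub hmem
  · intro hyp
    rcases B.eq_empty_or_nonempty with rfl | ⟨x₀, hx₀⟩
    · exfalso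
      have h1 := coord_const hν 1 0 1 le_rfl one_pos le_rfl
      have h0 := coord_const hν 0 0 1 le_rfl one_pos le_rfl
      have h10 := hyp (ContinuousMap.const X 1) (ContinuousMap.const X 0) 0 1 le_rfl one_pos
        le_rfl (fun x hx => absurd hx (Set.notMem_empty x))
      rw [h1, h0] at h10
      exact one_ne_zero h10
    · show ν ∈ closure (eHM '' {α : ℝ → X | IsStep α ∧ ∀ t ∈ Set.Ico (0:ℝ) 1, α t ∈ B})
      rw [mem_closure_pi_iff]
      intro I δ₀ hδ₀
      set M : ℝ := 1 + ∑ s ∈ I, ‖s.φ‖ with hMdef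
      have hM1 : (1:ℝ) ≤ M :=
        le_add_of_nonneg_right (Finset.sum_nonneg fun s _ => norm_nonneg _)
      have hMs : ∀ s ∈ I, ‖s.φ‖ ≤ M := by
        intro s hs
        have h1 : ‖s.φ‖ ≤ ∑ s ∈ I, ‖s.φ‖ :=
          Finset.single_le_sum (fun s _ => norm_nonneg s.φ) hs
        linarith
      set ε : ℝ := δ₀ / 3 with hεdef
      have hε : 0 < ε := by positivity
      have h2M : (0:ℝ) < 3 * (2 * M + 1) := by linarith
      set δ : ℝ := δ₀ / (3 * (2 * M + 1)) with hδdef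
      have hδ : 0 < δ := div_pos hδ₀ h2M
      set U : Set X := {x : X | ∃ y ∈ B, ∀ s ∈ I, |s.φ x - s.φ y| < ε} with hUdef
      have hUopen : IsOpen U := by
        have he : U = ⋃ y ∈ B, ⋂ s ∈ I, {x : X | |s.φ x - s.φ y| < ε} := by
          ext x
          simp [hUdef]
        rw [he]
        exact isOpen_biUnion fun y _ => isOpen_biInter_finset fun s _ =>
          isOpen_lt ((s.φ.continuous.sub continuous_const).abs) continuous_const
      have hBU : B ⊆ U := fun x hx => ⟨x, hx, fun s _ => by simpa using hε⟩
      obtain ⟨u, hu0, hu1, hu01⟩ := exists_continuous_zero_one_of_isClosed hB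
        hUopen.isClosed_compl (Set.disjoint_compl_right_iff_subset.mpr hBU)
      have hνu : ∀ s : SIdx X, s ∈ I → ν ⟨u, s.a, s.b, s.ha, s.hab, s.hb⟩ = 0 := by
        intro s hs
        have h1 := hyp u (ContinuousMap.const X 0) s.a s.b s.ha s.hab s.hb
          (fun x hx => by simpa using hu0 hx)
        rw [h1, coord_const hν 0 _ _ s.ha s.hab s.hb]
      set J : Finset (SIdx X) := I ∪ I.image
        (fun s => (⟨u, s.a, s.b, s.ha, s.hab, s.hb⟩ : SIdx X)) with hJdef
      have hν' : ν ∈ closure (eHM '' {α : ℝ → X | IsStep α}) := hν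
      obtain ⟨x, hxE, hxcl⟩ := (mem_closure_pi_iff.mp hν') J δ hδ
      obtain ⟨β, hβ, rfl⟩ := hxE
      have hβ' : IsStep β := hβ
      set g : X → X := fun x =>
        if h : ∃ y ∈ B, ∀ s ∈ I, |s.φ x - s.φ y| < ε then h.choose else x₀ with hgdef
      have hgB : ∀ x, g x ∈ B := by
        intro x
        rw [hgdef]
        dsimp only
        split_ifs with h
        · exact h.choose_spec.1
        · exact hx₀
      refine ⟨eHM (g ∘ β), ⟨g ∘ β, ⟨isStep_comp g hβ', fun t _ => hgB _⟩, rfl⟩, ?_⟩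
      rintro ⟨φ, a, b, ha, hab, hb⟩ hs
      set su : SIdx X := ⟨u, a, b, ha, hab, hb⟩ with hsudef
      have hsuJ : su ∈ J := Finset.mem_union_right _ (Finset.mem_image_of_mem _ hs)
      have hsJ : (⟨φ, a, b, ha, hab, hb⟩ : SIdx X) ∈ J := Finset.mem_union_left _ hs
      have hβs : |eHM β ⟨φ, a, b, ha, hab, hb⟩ - ν ⟨φ, a, b, ha, hab, hb⟩| < δ := hxcl _ hsJ
      have hν0 : ν su = 0 := hνu ⟨φ, a, b, ha, hab, hb⟩ hs
      have hβu : |eHM β su| < δ := by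
        have h1 := hxcl su hsuJ
        rwa [hν0, sub_zero] at h1
      have hint1 : IntervalIntegrable (fun t => φ (g (β t))) volume a b :=
        (isStep_comp g hβ').intervalIntegrable_comp φ ha hab.le hb
      have hint2 : IntervalIntegrable (fun t => φ (β t)) volume a b :=
        hβ'.intervalIntegrable_comp φ ha hab.le hb
      have hintu : IntervalIntegrable (fun t => u (β t)) volume a b :=
        hβ'.intervalIntegrable_comp u ha hab.le hb
      have hba : (0:ℝ) < b - a := sub_pos.mpr hab
      have hMφ : ‖φ‖ ≤ M := hMs ⟨φ, a, b, ha, hab, hb⟩ hs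
      have hkey : ∀ t : ℝ, |φ (g (β t)) - φ (β t)| ≤ ε + 2 * M * u (β t) := by
        intro t
        set x := β t with hxdef
        by_cases h : ∃ y ∈ B, ∀ s ∈ I, |s.φ x - s.φ y| < ε
        · have hgx : g x = h.choose := by rw [hgdef]; exact dif_pos h
          have h2 := h.choose_spec.2 ⟨φ, a, b, ha, hab, hb⟩ hs
          have hlt : |φ (g x) - φ x| < ε := by rw [hgx, abs_sub_comm]; exact h2
          have hu0' : 0 ≤ u x := (hu01 x).1
          have h3 : 0 ≤ 2 * M * u x := mul_nonneg (by linarith) hu0'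
          linarith
        · have hxU : x ∈ Uᶜ := h
          have hu1' : u x = 1 := hu1 hxU
          have hb1 : |φ (g x)| ≤ M := by
            rw [← Real.norm_eq_abs]; exact le_trans (φ.norm_coe_le_norm _) hMφ
          have hb2 : |φ x| ≤ M := by
            rw [← Real.norm_eq_abs]; exact le_trans (φ.norm_coe_le_norm _) hMφ
          have h3 := abs_sub (φ (g x)) (φ x)
          rw [hu1']
          linarith
      have hcompare : (∫ t in a..b, |φ (g (β t)) - φ (β t)|)
          ≤ ∫ t in a..b, (ε + 2 * M * u (β t)) := by
        apply intervalIntegral.integral_mono_on hab.le ((hint1.sub hint2).abs)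
          (intervalIntegrable_const.add (hintu.const_mul _))
        intro t _
        exact hkey t
      have hCval : (∫ t in a..b, (ε + 2 * M * u (β t)))
          = ε * (b - a) + 2 * M * ∫ t in a..b, u (β t) := by
        rw [intervalIntegral.integral_add intervalIntegrable_const (hintu.const_mul _),
          intervalIntegral.integral_const, intervalIntegral.integral_const_mul, smul_eq_mul]
        ring
      have hCbound : (∫ t in a..b, u (β t)) ≤ (b - a) * δ := by
        have h1 : eHM β su = (1 / (b - a)) * ∫ t in a..b, u (β t) := rfl
        have h2 : (∫ t in a..b, u (β t)) = (b - a) * eHM β su := by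
          rw [h1]
          field_simp
        rw [h2]
        have h3 : eHM β su ≤ |eHM β su| := le_abs_self _
        nlinarith
      have hdiff : |eHM (g ∘ β) ⟨φ, a, b, ha, hab, hb⟩ - eHM β ⟨φ, a, b, ha, hab, hb⟩|
          ≤ ε + 2 * M * δ := by
        have h1 : eHM (g ∘ β) ⟨φ, a, b, ha, hab, hb⟩ - eHM β ⟨φ, a, b, ha, hab, hb⟩
            = (1 / (b - a)) * ∫ t in a..b, (φ (g (β t)) - φ (β t)) := by
          rw [intervalIntegral.integral_sub hint1 hint2]
          simp only [eHM, Function.comp_apply]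
          ring
        rw [h1, abs_mul, abs_of_pos (by positivity : (0:ℝ) < 1 / (b - a))]
        have h2 : |∫ t in a..b, (φ (g (β t)) - φ (β t))|
            ≤ ∫ t in a..b, |φ (g (β t)) - φ (β t)| :=
          intervalIntegral.abs_integral_le_integral_abs hab.le
        have h4 : (∫ t in a..b, |φ (g (β t)) - φ (β t)|)
            ≤ ε * (b - a) + 2 * M * ((b - a) * δ) := by
          refine le_trans hcompare ?_
          rw [hCval]
          nlinarith
        have h5 : (1 / (b - a)) * |∫ t in a..b, (φ (g (β t)) - φ (β t))|
            ≤ (1 / (b - a)) * (ε * (b - a) + 2 * M * ((b - a) * δ)) :=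
          mul_le_mul_of_nonneg_left (le_trans h2 h4) (by positivity)
        refine le_trans h5 (le_of_eq ?_)
        field_simp
      have hδcalc : ε + 2 * M * δ + δ < δ₀ := by
        have h6 : (2 * M + 1) * δ = δ₀ / 3 := by
          rw [hδdef]
          field_simp
        have h7 : ε = δ₀ / 3 := hεdef
        nlinarith
      calc |eHM (g ∘ β) ⟨φ, a, b, ha, hab, hb⟩ - ν ⟨φ, a, b, ha, hab, hb⟩|
          ≤ |eHM (g ∘ β) ⟨φ, a, b, ha, hab, hb⟩ - eHM β ⟨φ, a, b, ha, hab, hb⟩|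
            + |eHM β ⟨φ, a, b, ha, hab, hb⟩ - ν ⟨φ, a, b, ha, hab, hb⟩| := abs_sub_le _ _ _
        _ < (ε + 2 * M * δ) + δ := add_lt_add_of_le_of_lt hdiff hβs
        _ < δ₀ := by linarith
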